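/- Let f be the Fibonacci sequence with f_0 = f_1 = 1. The map x ↦ F̂x with (F̂x)_k = (f_k/f_{k+1})x_k − (f_{k+1}/f_k)x_{k−1} (x_{−1}=0) is a linear bijection from c_0(F̂,p) onto c_0(p) = {y : lim_k |y_k|^{p_k} = 0}, for any bounded strictly positive sequence (p_k). -/

import Mathlib

open Filter Topology

def fibo : ℕ → ℕ
  | 0 => 1
  | 1 => 1
  | n + 2 => fibo (n + 1) + fibo n

noncomputable def Fhat (x : ℕ → ℝ) : ℕ → ℝ
  | 0 => (fibo 0 : ℝ) / fibo 1 * x 0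
  | k + 1 => (fibo (k + 1) : ℝ) / fibo (k + 2) * x (k + 1)
      - (fibo (k + 2) : ℝ) / fibo (k + 1) * x k

noncomputable def xseq (y : ℕ → ℝ) (k : ℕ) : ℝ :=
  ∑ j ∈ Finset.range (k + 1), ((fibo (k + 1) : ℝ) ^ 2 / ((fibo j : ℝ) * fibo (j + 1))) * y j

lemma fibo_pos (n : ℕ) : 0 < fibo n := by
  induction n using Nat.strong_induction_on with
  | _ n ih =>
    match n with
    | 0 => simp [fibo]
    | 1 => simp [fibo]
    | n + 2 =>
      have := ih (n + 1) (by omega)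
      simp [fibo]; omega

lemma fibo_ne (n : ℕ) : (fibo n : ℝ) ≠ 0 :=
  Nat.cast_ne_zero.2 (fibo_pos n).ne'

lemma Fhat_add (x y : ℕ → ℝ) : Fhat (x + y) = Fhat x + Fhat y := by
  funext n
  cases n with
  | zero => simp [Fhat]; ring
  | succ k => simp [Fhat]; ring

lemma Fhat_smul (c : ℝ) (x : ℕ → ℝ) : Fhat (c • x) = c • Fhat x := by
  funext n
  cases n with
  | zero => simp [Fhat]; ring
  | succ k => simp [Fhat]; ring

lemma Fhat_inj : Function.Injective Fhat := by
  intro x y h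
  funext n
  induction n with
  | zero =>
    have := congrFun h 0
    simpa [Fhat, fibo] using this
  | succ k ih =>
    have h1 : (fibo (k + 1) : ℝ) / fibo (k + 2) ≠ 0 :=
      div_ne_zero (fibo_ne _) (fibo_ne _)
    have hk := congrFun h (k + 1)
    simp only [Fhat, ih] at hk
    have h2 : (fibo (k + 1) : ℝ) / fibo (k + 2) * x (k + 1)
        = (fibo (k + 1) : ℝ) / fibo (k + 2) * y (k + 1) := by linarith
    exact mul_left_cancel₀ h1 h2

lemma Fhat_xseq (y : ℕ → ℝ) : Fhat (xseq y) = y := by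
  funext n
  cases n with
  | zero => simp [Fhat, xseq, fibo]
  | succ k =>
    show (fibo (k + 1) : ℝ) / fibo (k + 2) * xseq y (k + 1)
        - (fibo (k + 2) : ℝ) / fibo (k + 1) * xseq y k = y (k + 1)
    unfold xseq
    rw [Finset.sum_range_succ, mul_add, Finset.mul_sum, Finset.mul_sum,
        add_sub_right_comm, ← Finset.sum_sub_distrib]
    have hsum : ∑ j ∈ Finset.range (k + 1),
        ((fibo (k + 1) : ℝ) / fibo (k + 2) *
          ((fibo (k + 1 + 1) : ℝ) ^ 2 / ((fibo j : ℝ) * fibo (j + 1)) * y j)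
        - (fibo (k + 2) : ℝ) / fibo (k + 1) *
          ((fibo (k + 1) : ℝ) ^ 2 / ((fibo j : ℝ) * fibo (j + 1)) * y j)) = 0 := by
      refine Finset.sum_eq_zero fun j _ => ?_
      have := fibo_ne j; have := fibo_ne (j + 1); have := fibo_ne (k + 1); have := fibo_ne (k + 2)
      field_simp
      ring
    rw [hsum, zero_add]
    have := fibo_ne (k + 1); have := fibo_ne (k + 2)
    field_simp

theorem Fhat_bijOn_c0 (p : ℕ → ℝ) (H : ℝ) (hp : ∀ k, 0 < p k) (hH : ∀ k, p k ≤ H)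
    (A B : Set (ℕ → ℝ))
    (hA : A = {x | Tendsto (fun n => |Fhat x n| ^ p n) atTop (𝓝 0)})
    (hB : B = {y | Tendsto (fun n => |y n| ^ p n) atTop (𝓝 0)}) :
    IsLinearMap ℝ Fhat ∧ Set.BijOn Fhat A B := by
  subst hA hB
  refine ⟨⟨Fhat_add, Fhat_smul⟩, ?_, fun x _ y _ h => Fhat_inj h, ?_⟩
  · intro x hx
    exact hx
  · intro y hy
    refine ⟨xseq y, ?_, Fhat_xseq y⟩
    simpa [Set.mem_setOf_eq, Fhat_xseq] using hy
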